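/- arXiv:2208.08740 — 5 statements merged into one kernel-verified Lean document; each statement's English description precedes it below -/
import Mathlib

section
/- Let J : A → A be a retraction on an order unit space A (a positive linear map with J(1) = p ∈ [0,1] and J(e) = e whenever e ∈ [0,1] satisfies e ≤ p). Then the focus p is a principal element of the unit interval: if e, f ≤ p and e + f ≤ 1, then e + f ≤ p. -/
/-- The focus of a retraction on an order unit space is a principal element
of the unit interval. -/
theorem retraction_focus_principal {A : Type*} [AddCommGroup A] [PartialOrder A] [IsOrderedAddMonoid A] [Module ℝ A]
    (u : A) (hu0 : 0 ≤ u)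
    (hunit : ∀ a : A, ∃ n : ℕ, a ≤ n • u)
    (harch : ∀ a b : A, (∀ n : ℕ, n • a ≤ b) → a ≤ 0)
    (J : A →ₗ[ℝ] A) (hpos : ∀ a : A, 0 ≤ a → 0 ≤ J a)
    (p : A) (hJu : J u = p) (hp0 : 0 ≤ p) (hpu : p ≤ u)
    (hretr : ∀ e : A, 0 ≤ e → e ≤ u → e ≤ p → J e = e) :
    ∀ e f : A, 0 ≤ e → e ≤ u → 0 ≤ f → f ≤ u → e ≤ p → f ≤ p →
      e + f ≤ u → e + f ≤ p := by
  intro e f he0 heu hf0 hfu hep hfp hefu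
  have hJe := hretr e he0 heu hep
  have hJf := hretr f hf0 hfu hfp
  have h := hpos (u - (e + f)) (by rwa [sub_nonneg])
  rw [map_sub, map_add, hJu, hJe, hJf, sub_nonneg] at h
  exact h
end

section
/- Let J and J' be compressions on an order unit space A with foci p = J(1) and p' = J'(1). Then J and J' are complementary (i.e., Ker⁺(J) = Im⁺(J') and Ker⁺(J') = Im⁺(J)) if and only if p' = 1 - p. -/
/-- Two compressions `J`, `J'` on an order unit space, with foci `p = J 1`
and `p' = J' 1`, are complementary (`Ker⁺ J = Im⁺ J'` and `Ker⁺ J' = Im⁺ J`)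
iff `p' = 1 - p`. -/
theorem compressions_complementary_iff {A : Type*} [AddCommGroup A] [PartialOrder A] [IsOrderedAddMonoid A] [Module ℝ A]
    (u : A) (hu0 : 0 ≤ u)
    (hunit : ∀ a : A, ∃ n : ℕ, a ≤ n • u)
    (harch : ∀ a b : A, (∀ n : ℕ, n • a ≤ b) → a ≤ 0)
    (J J' : A →ₗ[ℝ] A)
    (hpos : ∀ a : A, 0 ≤ a → 0 ≤ J a) (hpos' : ∀ a : A, 0 ≤ a → 0 ≤ J' a)
    (p p' : A) (hJu : J u = p) (hJ'u : J' u = p')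
    (hp0 : 0 ≤ p) (hpu : p ≤ u) (hp'0 : 0 ≤ p') (hp'u : p' ≤ u)
    (hF2 : ∀ e : A, 0 ≤ e → e ≤ u → e ≤ p → J e = e)
    (hF3 : ∀ e : A, 0 ≤ e → e ≤ u → J e = 0 → e ≤ u - p)
    (hF2' : ∀ e : A, 0 ≤ e → e ≤ u → e ≤ p' → J' e = e)
    (hF3' : ∀ e : A, 0 ≤ e → e ≤ u → J' e = 0 → e ≤ u - p') :
    ({a : A | 0 ≤ a ∧ J a = 0} = {a : A | 0 ≤ a ∧ J' a = a} ∧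
      {a : A | 0 ≤ a ∧ J' a = 0} = {a : A | 0 ≤ a ∧ J a = a}) ↔ p' = u - p := by
  have hJp : J p = p := hF2 p hp0 hpu le_rfl
  have hJ'p' : J' p' = p' := hF2' p' hp'0 hp'u le_rfl
  constructor
  · rintro ⟨h1, h2⟩
    have hJ'p : J' p = 0 := by
      have hmem : p ∈ {a : A | 0 ≤ a ∧ J a = a} := ⟨hp0, hJp⟩
      rw [← h2] at hmem
      exact hmem.2
    have hJup : J (u - p) = 0 := by rw [map_sub, hJu, hJp, sub_self]
    have hmem2 : (u - p) ∈ {a : A | 0 ≤ a ∧ J' a = a} := by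
      rw [← h1]; exact ⟨sub_nonneg.2 hpu, hJup⟩
    have hsum : p' = J' (u - p) + J' p := by rw [← map_add, sub_add_cancel, hJ'u]
    rw [hsum, hmem2.2, hJ'p, add_zero]
  · intro hpp'
    -- basic algebraic consequences
    have hp_eq : p = u - p' := by rw [hpp']; abel
    have hJp' : J p' = 0 := by rw [hpp', map_sub, hJu, hJp, sub_self]
    have hJ'p : J' p = 0 := by rw [hp_eq, map_sub, hJ'u, hJ'p', sub_self]
    -- monotonicity of J and J'
    have hmono : ∀ a b : A, a ≤ b → J a ≤ J b := by
      intro a b h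
      have := hpos _ (sub_nonneg.2 h)
      rw [map_sub] at this
      exact sub_nonneg.mp this
    have hmono' : ∀ a b : A, a ≤ b → J' a ≤ J' b := by
      intro a b h
      have := hpos' _ (sub_nonneg.2 h)
      rw [map_sub] at this
      exact sub_nonneg.mp this
    -- halving a positive element stays positive (using the Archimedean property)
    have half : ∀ a : A, 0 ≤ a → 0 ≤ (2:ℝ)⁻¹ • a := by
      intro a ha
      obtain ⟨n₀, hn₀⟩ := hunit ((2:ℝ)⁻¹ • a)
      have hn0u : (0:A) ≤ (n₀:ℝ) • u := by
        rw [Nat.cast_smul_eq_nsmul]; exact nsmul_nonneg hu0 _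
      have hb : (0:A) ≤ (n₀:ℝ) • u - (2:ℝ)⁻¹ • a := by
        rw [Nat.cast_smul_eq_nsmul]; exact sub_nonneg.2 hn₀
      refine neg_nonpos.mp
        (harch (-((2:ℝ)⁻¹ • a)) ((n₀:ℝ) • u + ((n₀:ℝ) • u - (2:ℝ)⁻¹ • a)) ?_)
      intro n
      rw [← Nat.cast_smul_eq_nsmul ℝ n, smul_neg, smul_smul]
      rcases Nat.even_or_odd n with ⟨q, hq⟩ | ⟨q, hq⟩
      · subst hq
        have h1 : ((q + q : ℕ):ℝ) * 2⁻¹ = (q:ℝ) := by push_cast; ring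
        rw [h1, Nat.cast_smul_eq_nsmul]
        have h2 : (0:A) ≤ ((n₀:ℝ) • u + ((n₀:ℝ) • u - (2:ℝ)⁻¹ • a)) - (-(q • a)) := by
          have heq : ((n₀:ℝ) • u + ((n₀:ℝ) • u - (2:ℝ)⁻¹ • a)) - (-(q • a))
              = (n₀:ℝ) • u + ((n₀:ℝ) • u - (2:ℝ)⁻¹ • a) + q • a := by abel
          rw [heq]
          exact add_nonneg (add_nonneg hn0u hb) (nsmul_nonneg ha q)
        exact sub_nonneg.mp h2
      · subst hq
        have h1 : ((2 * q + 1 : ℕ):ℝ) * 2⁻¹ = (q:ℝ) + 2⁻¹ := by push_cast; ring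
        rw [h1, add_smul, Nat.cast_smul_eq_nsmul]
        have h2 : (0:A) ≤ ((n₀:ℝ) • u + ((n₀:ℝ) • u - (2:ℝ)⁻¹ • a))
            - (-(q • a + (2:ℝ)⁻¹ • a)) := by
          have heq : ((n₀:ℝ) • u + ((n₀:ℝ) • u - (2:ℝ)⁻¹ • a))
              - (-(q • a + (2:ℝ)⁻¹ • a)) = (n₀:ℝ) • u + (n₀:ℝ) • u + q • a := by abel
          rw [heq]
          exact add_nonneg (add_nonneg hn0u hn0u) (nsmul_nonneg ha q)
        exact sub_nonneg.mp h2
    -- scaling by (2^k)⁻¹ stays positive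
    have invpow : ∀ (k : ℕ) (a : A), 0 ≤ a → 0 ≤ ((2:ℝ)^k)⁻¹ • a := by
      intro k
      induction k with
      | zero => intro a ha; simpa using ha
      | succ k ih =>
          intro a ha
          have h1 : 0 ≤ ((2:ℝ)^k)⁻¹ • ((2:ℝ)⁻¹ • a) := ih _ (half a ha)
          rw [smul_smul] at h1
          have h2 : ((2:ℝ)^k)⁻¹ * (2:ℝ)⁻¹ = ((2:ℝ)^(k+1))⁻¹ := by
            rw [pow_succ, mul_inv]
          rwa [h2] at h1
    -- every positive element is a positive multiple of an element of [0, u]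
    have key : ∀ a : A, 0 ≤ a → ∃ c : ℝ, c ≠ 0 ∧ 0 ≤ c • a ∧ c • a ≤ u := by
      intro a ha
      obtain ⟨n, hn⟩ := hunit a
      refine ⟨((2:ℝ)^n)⁻¹, inv_ne_zero (pow_ne_zero _ two_ne_zero),
        invpow n a ha, ?_⟩
      have hmul : n • u ≤ (2^n : ℕ) • u := by
        have heq : (2^n : ℕ) • u = n • u + (2^n - n) • u := by
          rw [← add_nsmul, Nat.add_sub_cancel' (Nat.le_of_lt (Nat.lt_two_pow_self (n := n)))]
        rw [heq]
        exact le_add_of_nonneg_right (nsmul_nonneg hu0 _)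
      have h2 : (0:A) ≤ (2^n : ℕ) • u - a := sub_nonneg.2 (hn.trans hmul)
      have h3 : u - ((2:ℝ)^n)⁻¹ • a = ((2:ℝ)^n)⁻¹ • ((2^n : ℕ) • u - a) := by
        have hnorm : ((2:ℝ)^n)⁻¹ * ((2^n : ℕ):ℝ) = 1 := by
          push_cast
          exact inv_mul_cancel₀ (pow_ne_zero _ two_ne_zero)
        rw [smul_sub, ← Nat.cast_smul_eq_nsmul ℝ (2^n) u, smul_smul, hnorm, one_smul]
      have h4 : (0:A) ≤ u - ((2:ℝ)^n)⁻¹ • a := by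
        rw [h3]; exact invpow n _ h2
      exact sub_nonneg.mp h4
    -- the four claims on the unit interval
    have C1 : ∀ e : A, 0 ≤ e → e ≤ u → J e = 0 → J' e = e := by
      intro e he0 heu hJe
      have h1 : e ≤ p' := by rw [hpp']; exact hF3 e he0 heu hJe
      exact hF2' e he0 heu h1
    have C2 : ∀ e : A, 0 ≤ e → e ≤ u → J' e = e → J e = 0 := by
      intro e he0 heu hJ'e
      have h1 : e ≤ p' := by
        have h := hpos' _ (sub_nonneg.2 heu)
        rw [map_sub, hJ'u, hJ'e] at h
        exact sub_nonneg.mp h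
      have h2 : p ≤ u - e := by
        rw [hpp'] at h1
        exact le_sub_comm.mp h1
      have h3 : p ≤ p - J e := by
        have h := hmono p (u - e) h2
        rwa [hJp, map_sub, hJu] at h
      exact le_antisymm ((le_sub_self_iff _).mp h3) (hpos e he0)
    have C3 : ∀ e : A, 0 ≤ e → e ≤ u → J' e = 0 → J e = e := by
      intro e he0 heu hJ'e
      have h1 : e ≤ p := by rw [hp_eq]; exact hF3' e he0 heu hJ'e
      exact hF2 e he0 heu h1
    have C4 : ∀ e : A, 0 ≤ e → e ≤ u → J e = e → J' e = 0 := by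
      intro e he0 heu hJe
      have h1 : e ≤ p := by
        have h := hpos _ (sub_nonneg.2 heu)
        rw [map_sub, hJu, hJe] at h
        exact sub_nonneg.mp h
      have h2 : p' ≤ u - e := by
        rw [hp_eq] at h1
        exact le_sub_comm.mp h1
      have h3 : p' ≤ p' - J' e := by
        have h := hmono' p' (u - e) h2
        rwa [hJ'p', map_sub, hJ'u] at h
      exact le_antisymm ((le_sub_self_iff _).mp h3) (hpos' e he0)
    -- transfer from the unit interval to the whole positive cone
    have transfer0 : ∀ S T : A →ₗ[ℝ] A,
        (∀ e : A, 0 ≤ e → e ≤ u → S e = 0 → T e = e) →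
        ∀ a : A, 0 ≤ a → S a = 0 → T a = a := by
      intro S T hC a ha hSa
      obtain ⟨c, hc, he0, heu⟩ := key a ha
      have hSe : S (c • a) = 0 := by rw [map_smul, hSa, smul_zero]
      have hTe : T (c • a) = c • a := hC _ he0 heu hSe
      calc T a = c⁻¹ • T (c • a) := by
            rw [map_smul, smul_smul, inv_mul_cancel₀ hc, one_smul]
        _ = c⁻¹ • (c • a) := by rw [hTe]
        _ = a := by rw [smul_smul, inv_mul_cancel₀ hc, one_smul]
    have transfer1 : ∀ S T : A →ₗ[ℝ] A,
        (∀ e : A, 0 ≤ e → e ≤ u → S e = e → T e = 0) →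
        ∀ a : A, 0 ≤ a → S a = a → T a = 0 := by
      intro S T hC a ha hSa
      obtain ⟨c, hc, he0, heu⟩ := key a ha
      have hSe : S (c • a) = c • a := by rw [map_smul, hSa]
      have hTe : T (c • a) = 0 := hC _ he0 heu hSe
      calc T a = c⁻¹ • T (c • a) := by
            rw [map_smul, smul_smul, inv_mul_cancel₀ hc, one_smul]
        _ = 0 := by rw [hTe, smul_zero]
    constructor
    · ext a
      simp only [Set.mem_setOf_eq]
      constructor
      · rintro ⟨ha, h⟩; exact ⟨ha, transfer0 J J' C1 a ha h⟩
      · rintro ⟨ha, h⟩; exact ⟨ha, transfer1 J' J C2 a ha h⟩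
    · ext a
      simp only [Set.mem_setOf_eq]
      constructor
      · rintro ⟨ha, h⟩; exact ⟨ha, transfer0 J' J C3 a ha h⟩
      · rintro ⟨ha, h⟩; exact ⟨ha, transfer1 J J' C4 a ha h⟩
end

section
/- Let X be a basically disconnected compact Hausdorff space. For every bounded Baire-measurable function h : X → ℝ there exists a unique continuous function Θ(h) ∈ C(X, ℝ) such that the set {x ∈ X : h(x) ≠ Θ(h)(x)} is meager. -/
/-- A topological space is basically disconnected if the closure of every open Fσ set
is open. -/
def BasicallyDisconnected (X : Type*) [TopologicalSpace X] : Prop :=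
  ∀ U : Set X, IsOpen U → (∃ F : ℕ → Set X, (∀ n, IsClosed (F n)) ∧ U = ⋃ n, F n) →
    IsOpen (closure U)

/-- The Baire σ-algebra on a topological space: the smallest σ-algebra making all
continuous real-valued functions measurable. -/
def baireMS (X : Type*) [TopologicalSpace X] : MeasurableSpace X :=
  ⨆ f : C(X, ℝ), MeasurableSpace.comap f (borel ℝ)

open Set Filter MeasureTheory

section helpers

variable {X : Type*} [TopologicalSpace X]

lemma myIsNowhereDense_isMeagre {s : Set X} (hs : IsNowhereDense s) : IsMeagre s := by
  rw [isMeagre_iff_countable_union_isNowhereDense]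
  exact ⟨{s}, by simpa, countable_singleton s, by simp⟩

lemma myIsMeagre_closure_diff {U : Set X} (hU : IsOpen U) : IsMeagre (closure U \ U) := by
  have hclosed : IsClosed (closure U \ U) := isClosed_closure.sdiff hU
  apply myIsNowhereDense_isMeagre
  rw [hclosed.isNowhereDense_iff, eq_empty_iff_forall_notMem]
  intro x hx
  have hxc : x ∈ closure U := (interior_subset hx).1
  obtain ⟨y, hy, hyU⟩ := mem_closure_iff.mp hxc _ isOpen_interior hx
  exact (interior_subset hy).2 hyU

lemma myIsMeagre_union {s t : Set X} (hs : IsMeagre s) (ht : IsMeagre t) :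
    IsMeagre (s ∪ t) := by
  rw [IsMeagre, compl_union]; exact Filter.inter_mem hs ht

lemma myIsMeagre_biUnion {ι : Type*} (s : Finset ι) (f : ι → Set X)
    (hf : ∀ i ∈ s, IsMeagre (f i)) : IsMeagre (⋃ i ∈ s, f i) := by
  classical
  induction s using Finset.induction_on with
  | empty => simpa using IsMeagre.empty
  | @insert a s ha ih =>
    rw [Finset.set_biUnion_insert]
    exact myIsMeagre_union (hf a (Finset.mem_insert_self a s))
      (ih fun i hi => hf i (Finset.mem_insert_of_mem hi))

lemma closure_clopen_of_fsigma (hX : BasicallyDisconnected X) {U : Set X} (hU : IsOpen U)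
    (hF : ∃ F : ℕ → Set X, (∀ n, IsClosed (F n)) ∧ U = ⋃ n, F n) :
    IsClopen (closure U) ∧ IsMeagre (symmDiff U (closure U)) := by
  refine ⟨⟨isClosed_closure, hX U hU hF⟩, ?_⟩
  refine (myIsMeagre_closure_diff hU).mono ?_
  intro x hx
  rcases Set.mem_symmDiff.mp hx with ⟨h1, h2⟩ | ⟨h1, h2⟩
  · exact absurd (subset_closure h1) h2
  · exact ⟨h1, h2⟩

lemma clopen_approx (hX : BasicallyDisconnected X) {S : Set X}
    (hS : MeasurableSet[baireMS X] S) :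
    ∃ V : Set X, IsClopen V ∧ IsMeagre (symmDiff S V) := by
  let M : MeasurableSpace X :=
  { MeasurableSet' := fun S => ∃ V : Set X, IsClopen V ∧ IsMeagre (symmDiff S V)
    measurableSet_empty := ⟨∅, isClopen_empty, by
      simpa [symmDiff_self] using (IsMeagre.empty : IsMeagre (∅ : Set X))⟩
    measurableSet_compl := fun s ⟨V, hV, hm⟩ => ⟨Vᶜ, hV.compl, by
      rwa [compl_symmDiff_compl]⟩
    measurableSet_iUnion := fun s hs => by
      choose V hV hm using hs
      have hUopen : IsOpen (⋃ n, V n) := isOpen_iUnion fun n => (hV n).2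
      obtain ⟨hclopen, hmeag⟩ := closure_clopen_of_fsigma hX hUopen
        ⟨V, fun n => (hV n).1, rfl⟩
      refine ⟨closure (⋃ n, V n), hclopen, ?_⟩
      have h1 : symmDiff (⋃ n, s n) (⋃ n, V n) ⊆ ⋃ n, symmDiff (s n) (V n) := by
        intro x hx
        rcases Set.mem_symmDiff.mp hx with ⟨hx1, hx2⟩ | ⟨hx1, hx2⟩
        · obtain ⟨n, hn⟩ := mem_iUnion.mp hx1
          exact mem_iUnion.mpr ⟨n, Set.mem_symmDiff.mpr
            (Or.inl ⟨hn, fun hc => hx2 (mem_iUnion.mpr ⟨n, hc⟩)⟩)⟩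
        · obtain ⟨n, hn⟩ := mem_iUnion.mp hx1
          exact mem_iUnion.mpr ⟨n, Set.mem_symmDiff.mpr
            (Or.inr ⟨hn, fun hc => hx2 (mem_iUnion.mpr ⟨n, hc⟩)⟩)⟩
      have h2 := symmDiff_triangle (⋃ n, s n) (⋃ n, V n) (closure (⋃ n, V n))
      refine ((myIsMeagre_union (isMeagre_iUnion fun n => hm n) hmeag).mono ?_)
      exact h2.trans (union_subset_union h1 (subset_refl _)) }
  have hle : baireMS X ≤ M := by
    refine iSup_le fun f => ?_
    rw [borel_eq_generateFrom_Iio ℝ, MeasurableSpace.comap_generateFrom]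
    refine MeasurableSpace.generateFrom_le ?_
    rintro s ⟨t, ⟨a, rfl⟩, rfl⟩
    show ∃ V : Set X, IsClopen V ∧ IsMeagre (symmDiff (f ⁻¹' Iio a) V)
    have hopen : IsOpen (f ⁻¹' Iio a) := isOpen_Iio.preimage f.continuous
    have hfs : f ⁻¹' Iio a = ⋃ n : ℕ, f ⁻¹' Iic (a - 1/(n+1)) := by
      ext x
      simp only [mem_preimage, mem_Iio, mem_iUnion, mem_Iic]
      constructor
      · intro hx
        obtain ⟨n, hn⟩ := exists_nat_one_div_lt (sub_pos.mpr hx)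
        exact ⟨n, by linarith⟩
      · rintro ⟨n, hn⟩
        have hpos : (0:ℝ) < 1/(n+1) := by positivity
        linarith
    obtain ⟨hcl, hm⟩ := closure_clopen_of_fsigma hX hopen
      ⟨fun n => f ⁻¹' Iic (a - 1/(n+1)),
        fun n => isClosed_Iic.preimage f.continuous, hfs⟩
    exact ⟨_, hcl, hm⟩
  exact hle S hS

lemma continuous_clopen_ind {V : Set X} (hV : IsClopen V) (c : ℝ)
    [DecidablePred (· ∈ V)] :
    Continuous fun x => if x ∈ V then c else (0:ℝ) := by
  have hfr : frontier V = ∅ := hV.frontier_eq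
  refine Continuous.if (fun a ha => absurd ?_ (notMem_empty a))
    continuous_const continuous_const
  rw [← hfr]
  simpa using ha

end helpers

/-- On a basically disconnected compact Hausdorff space, every bounded
Baire-measurable function agrees with a unique continuous function off a meager set. -/
theorem baire_approx_continuous (X : Type*) [TopologicalSpace X] [CompactSpace X]
    [T2Space X] (hX : BasicallyDisconnected X)
    (h : X → ℝ) (hmeas : @Measurable X ℝ (baireMS X) (borel ℝ) h)
    (hbdd : ∃ M, ∀ x, |h x| ≤ M) :
    ∃! g : C(X, ℝ), IsMeagre {x : X | h x ≠ g x} := by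
  classical
  obtain ⟨M, hM⟩ := hbdd
  obtain ⟨N, hN⟩ := exists_nat_ge M
  have hmeas' : Measurable[baireMS X] h := hmeas
  -- level sets
  set A : ℕ → ℤ → Set X := fun n k => {x | ⌊h x * 2^n⌋ = k} with hA
  have hAmeas : ∀ n k, MeasurableSet[baireMS X] (A n k) := by
    intro n k
    have hAeq : A n k = h ⁻¹' ((fun y : ℝ => y * 2^n) ⁻¹' (Ico (k:ℝ) (k+1))) := by
      ext x
      simp only [hA, mem_setOf_eq, mem_preimage, mem_Ico]
      exact Int.floor_eq_iff
    rw [hAeq]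
    exact hmeas' ((measurable_id.mul_const _) measurableSet_Ico)
  choose V hVclopen hVmeag using fun n k => clopen_approx hX (hAmeas n k)
  set K : ℕ → Finset ℤ := fun n => Finset.Icc (-((N:ℤ) * 2^n + 1)) ((N:ℤ) * 2^n) with hK
  set g : ℕ → C(X, ℝ) := fun n =>
    ⟨fun x => ∑ k ∈ K n, if x ∈ V n k then (k:ℝ)/2^n else 0,
      continuous_finset_sum _ fun k _ => continuous_clopen_ind (hVclopen n k) _⟩ with hg
  have h2pos : ∀ n : ℕ, (0:ℝ) < 2^n := fun n => by positivity
  have hk0mem : ∀ n x, ⌊h x * 2^n⌋ ∈ K n := by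
    intro n x
    have hb : |h x| ≤ (N:ℝ) := (hM x).trans hN
    rw [abs_le] at hb
    have hub := mul_le_mul_of_nonneg_right hb.2 (h2pos n).le
    have hlb := mul_le_mul_of_nonneg_right hb.1 (h2pos n).le
    rw [hK, Finset.mem_Icc]
    constructor
    · rw [Int.le_floor]
      push_cast
      linarith
    · have hle : h x * 2^n ≤ (((N:ℤ) * 2^n : ℤ) : ℝ) := by push_cast; linarith
      calc ⌊h x * 2^n⌋ ≤ ⌊(((N:ℤ) * 2^n : ℤ) : ℝ)⌋ := Int.floor_le_floor hle
        _ = (N:ℤ) * 2^n := Int.floor_intCast _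
  -- bad set
  set Bad : Set X := ⋃ n : ℕ, ⋃ k ∈ K n, symmDiff (A n k) (V n k) with hBad
  have hBadMeag : IsMeagre Bad := by
    apply isMeagre_iUnion
    intro n
    exact myIsMeagre_biUnion (K n) _ fun k _ => hVmeag n k
  -- on the good set, g n equals the dyadic approximation
  have hgood : ∀ x, x ∉ Bad → ∀ n, g n x = (⌊h x * 2^n⌋ : ℝ)/2^n := by
    intro x hx n
    have hxn : ∀ k ∈ K n, x ∉ symmDiff (A n k) (V n k) := by
      intro k hk hc
      exact hx (mem_iUnion.mpr ⟨n, mem_iUnion₂.mpr ⟨k, hk, hc⟩⟩)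
    have hxV : ∀ k ∈ K n, (x ∈ V n k ↔ x ∈ A n k) := by
      intro k hk
      have hns := hxn k hk
      rw [Set.mem_symmDiff] at hns
      push_neg at hns
      exact ⟨hns.2, hns.1⟩
    have hk0 : x ∈ A n (⌊h x * 2^n⌋) := rfl
    show (∑ k ∈ K n, if x ∈ V n k then (k:ℝ)/2^n else 0) = (⌊h x * 2^n⌋ : ℝ)/2^n
    rw [Finset.sum_eq_single_of_mem (⌊h x * 2^n⌋) (hk0mem n x)]
    · rw [if_pos ((hxV _ (hk0mem n x)).mpr hk0)]
    · intro k hk hne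
      rw [if_neg]
      intro hxVk
      have hxa : x ∈ A n k := (hxV k hk).mp hxVk
      exact hne ((hxa : ⌊h x * 2^n⌋ = k) ▸ rfl)
  -- dyadic approximation error
  have hsn : ∀ x (n : ℕ), |(⌊h x * 2^n⌋ : ℝ)/2^n - h x| ≤ (1/2)^n := by
    intro x n
    have h1 := Int.floor_le (h x * 2^n)
    have h2' := Int.lt_floor_add_one (h x * 2^n)
    have hkey : (⌊h x * 2^n⌋ : ℝ)/2^n - h x = ((⌊h x * 2^n⌋ : ℝ) - h x * 2^n)/2^n := by
      rw [sub_div, mul_div_cancel_right₀ _ (h2pos n).ne']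
    rw [hkey, abs_div, abs_of_pos (h2pos n), one_div_pow]
    gcongr
    rw [abs_le]
    constructor <;> linarith
  have hD : Dense Badᶜ := dense_of_mem_residual hBadMeag
  -- Cauchy estimates
  have hhalf : ∀ n : ℕ, ((1:ℝ)/2)^n > 0 := fun n => by positivity
  have hdist : ∀ n m : ℕ, dist (g n) (g m) ≤ (1/2)^n + (1/2)^m := by
    intro n m
    rw [ContinuousMap.dist_le (by positivity)]
    intro x
    have hclosed : IsClosed {x : X | dist (g n x) (g m x) ≤ (1/2)^n + (1/2)^m} :=
      isClosed_le ((g n).continuous.dist (g m).continuous) continuous_const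
    have hsub : Badᶜ ⊆ {x : X | dist (g n x) (g m x) ≤ (1/2)^n + (1/2)^m} := by
      intro y hy
      simp only [mem_setOf_eq, Real.dist_eq]
      rw [hgood y hy n, hgood y hy m]
      have e1 := hsn y n
      have e2 := hsn y m
      have tri := abs_sub_le ((⌊h y * 2^n⌋ : ℝ)/2^n) (h y) ((⌊h y * 2^m⌋ : ℝ)/2^m)
      rw [abs_sub_comm (h y)] at tri
      linarith
    have := hclosed.closure_subset_iff.mpr hsub
    rw [hD.closure_eq] at this
    exact this (mem_univ x)
  have hC : CauchySeq g := by
    apply cauchySeq_of_le_geometric (1/2 : ℝ) 2 (by norm_num)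
    intro n
    have := hdist n (n+1)
    have hps : ((1:ℝ)/2)^(n+1) = (1/2)^n * (1/2) := pow_succ _ _
    calc dist (g n) (g (n+1)) ≤ (1/2)^n + (1/2)^(n+1) := this
      _ ≤ 2 * (1/2)^n := by rw [hps]; nlinarith [hhalf n]
  obtain ⟨gl, hgl⟩ := cauchySeq_tendsto_of_complete hC
  have hfinal : {x : X | h x ≠ gl x} ⊆ Bad := by
    intro x hx
    by_contra hxB
    apply hx
    have h1 : Tendsto (fun n => g n x) atTop (nhds (gl x)) :=
      ((continuous_eval_const x).tendsto gl).comp hgl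
    have h2 : Tendsto (fun n => g n x) atTop (nhds (h x)) := by
      rw [tendsto_iff_dist_tendsto_zero]
      refine squeeze_zero (g := fun n : ℕ => ((1:ℝ)/2)^n) (fun n => dist_nonneg)
        (fun n => ?_)
        (tendsto_pow_atTop_nhds_zero_of_lt_one (by norm_num) (by norm_num))
      rw [hgood x hxB n, Real.dist_eq]
      exact hsn x n
    exact tendsto_nhds_unique h2 h1
  refine ⟨gl, hBadMeag.mono hfinal, ?_⟩
  intro g' hg'
  have hopen : IsOpen {x : X | g' x ≠ gl x} :=
    (isClosed_eq g'.continuous gl.continuous).isOpen_compl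
  have hsub : {x : X | g' x ≠ gl x} ⊆ {x : X | h x ≠ g' x} ∪ {x : X | h x ≠ gl x} := by
    intro x hx
    by_contra hc
    simp only [mem_union, mem_setOf_eq, not_or, not_not] at hc
    exact hx (hc.1.symm.trans hc.2)
  have hmeag2 : IsMeagre {x : X | g' x ≠ gl x} :=
    (myIsMeagre_union hg' (hBadMeag.mono hfinal)).mono hsub
  have hempty : {x : X | g' x ≠ gl x} = ∅ := by
    by_contra hne
    obtain ⟨x, hx⟩ := nonempty_iff_ne_empty.mpr hne
    have hDense : Dense {x : X | g' x ≠ gl x}ᶜ := dense_of_mem_residual hmeag2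
    obtain ⟨y, hy⟩ := hDense.inter_open_nonempty _ hopen ⟨x, hx⟩
    exact hy.2 hy.1
  apply ContinuousMap.ext
  intro x
  by_contra hc
  exact (eq_empty_iff_forall_notMem.mp hempty x) hc
end

section
/- Let X be a real Hilbert space and define on A = ℝ × X the product (α, y)∘(β, z) = (αβ + ⟨y, z⟩, αz + βy). Then A with this product, unit (1,0), and the norm ‖(α,y)‖ = |α| + ‖y‖ is a JB-algebra (the spin factor): the product is commutative and bilinear, satisfies the Jordan identity (a²∘b)∘a = a²∘(b∘a), and −1 ≤ a ≤ 1 implies 0 ≤ a∘a ≤ 1 with respect to the cone A⁺ = {(α, y) : ‖y‖ ≤ α}. -/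
/-- The spin factor Jordan product on `ℝ × X` for a real Hilbert space `X`. -/
noncomputable def spinMul {X : Type*} [NormedAddCommGroup X] [InnerProductSpace ℝ X]
    (a b : ℝ × X) : ℝ × X :=
  (a.1 * b.1 + inner ℝ a.2 b.2, a.1 • b.2 + b.1 • a.2)

/-- The spin factor order: `a ≤ b` iff `‖b.2 − a.2‖ ≤ b.1 − a.1`. -/
def spinLE {X : Type*} [NormedAddCommGroup X] [InnerProductSpace ℝ X]
    (a b : ℝ × X) : Prop :=
  ‖b.2 - a.2‖ ≤ b.1 - a.1

/-- For a real Hilbert space `X`, the space `A = ℝ × X` with the product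
`(α,y)∘(β,z) = (αβ + ⟨y,z⟩, αz + βy)`, unit `(1,0)` and norm `‖(α,y)‖ = |α| + ‖y‖` is
a JB-algebra (the spin factor): the product is commutative, bilinear, unital, satisfies
the Jordan identity, and `−1 ≤ a ≤ 1` implies `0 ≤ a∘a ≤ 1` for the cone
`{(α,y) : ‖y‖ ≤ α}`. -/
theorem spin_factor_is_JB (X : Type*) [NormedAddCommGroup X] [InnerProductSpace ℝ X]
    [CompleteSpace X] :
    (∀ a b : ℝ × X, spinMul a b = spinMul b a) ∧
    (∀ a b c : ℝ × X, spinMul (a + b) c = spinMul a c + spinMul b c) ∧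
    (∀ (r : ℝ) (a b : ℝ × X), spinMul (r • a) b = r • spinMul a b) ∧
    (∀ a : ℝ × X, spinMul ((1 : ℝ), (0 : X)) a = a) ∧
    (∀ a b : ℝ × X,
      spinMul (spinMul a a) (spinMul b a) = spinMul (spinMul (spinMul a a) b) a) ∧
    (∀ a : ℝ × X, spinLE (-((1 : ℝ), (0 : X))) a → spinLE a ((1 : ℝ), (0 : X)) →
      spinLE 0 (spinMul a a) ∧ spinLE (spinMul a a) ((1 : ℝ), (0 : X))) := by
  refine ⟨?_, ?_, ?_, ?_, ?_, ?_⟩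
  · intro a b
    ext
    · simp [spinMul, real_inner_comm]; ring
    · simp [spinMul]; abel
  · intro a b c
    ext
    · simp [spinMul, inner_add_left]; ring
    · simp [spinMul, smul_add, add_smul]; abel
  · intro r a b
    ext
    · simp [spinMul, real_inner_smul_left]; ring
    · simp [spinMul, smul_add, smul_smul, mul_comm]
  · intro a
    simp [spinMul]
  · intro a b
    ext
    · simp [spinMul, inner_add_left, inner_add_right, real_inner_smul_left,
        real_inner_smul_right, real_inner_comm]
      ring
    · simp only [spinMul, smul_add, smul_smul]
      match_scalars <;>
        simp [inner_add_left, inner_add_right, real_inner_smul_left,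
          real_inner_smul_right, real_inner_comm] <;> ring
  · rintro ⟨α, y⟩ h1 h2
    simp only [spinLE, spinMul, Prod.fst_neg, Prod.snd_neg, sub_neg_eq_add, add_zero,
      zero_add, sub_zero, Prod.fst_zero, Prod.snd_zero] at *
    have hy : ‖α • y + α • y‖ = 2 * |α| * ‖y‖ := by
      rw [← two_smul ℝ, smul_smul, norm_smul]
      simp [abs_mul, mul_assoc]
    have hin : (inner ℝ y y : ℝ) = ‖y‖ ^ 2 := real_inner_self_eq_norm_sq y
    constructor
    · rw [hy, hin]
      nlinarith [abs_nonneg α, norm_nonneg y, sq_abs α, sq_nonneg (|α| - ‖y‖)]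
    · rw [show (0:X) - (α • y + α • y) = -(α • y + α • y) by abel, norm_neg, hy, hin]
      rw [zero_sub, norm_neg] at h2
      have habs : |α| + ‖y‖ ≤ 1 := by
        rcases abs_cases α with ⟨h, _⟩ | ⟨h, _⟩ <;> linarith
      nlinarith [abs_nonneg α, norm_nonneg y, sq_abs α]
end

section
/- Let A be an order unit space with a compression base (J_p)_{p∈P} having the comparability property, and let a ∈ A. If p, q ∈ P are both elements of P^±(a) (i.e., p, q lie in the P-bicommutant of a and satisfy J_{1−p}(a) ≤ 0 ≤ J_p(a), J_{1−q}(a) ≤ 0 ≤ J_q(a)), then J_p(a) = J_q(a) and −J_{1−p}(a) = −J_{1−q}(a); that is, the orthogonal decomposition a = a⁺ − a⁻ with a⁺ = J_p(a), a⁻ = −J_{1−p}(a), J_p(a⁻) = 0, is unique. -/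
/-- A compression base on an order unit space `(A, A⁺, u)`: a family of compressions
`J p` indexed by their foci `p ∈ P`, where `P` is a normal subalgebra of the unit
interval, satisfying `J (p+r) ∘ J (q+r) = J r` whenever `p + q + r ≤ u` in `P`. -/
structure CompressionBase (A : Type*) [AddCommGroup A] [PartialOrder A] [IsOrderedAddMonoid A] [Module ℝ A] (u : A) where
  P : Set A
  J : A → A →ₗ[ℝ] A
  mem_nonneg : ∀ p ∈ P, (0 : A) ≤ p
  mem_le : ∀ p ∈ P, p ≤ u
  zero_mem : (0 : A) ∈ P
  compl_mem : ∀ p ∈ P, u - p ∈ P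
  add_mem : ∀ p ∈ P, ∀ q ∈ P, p + q ≤ u → p + q ∈ P
  normal : ∀ d e f : A, 0 ≤ d → 0 ≤ e → 0 ≤ f → d + e + f ≤ u →
    d + e ∈ P → d + f ∈ P → d ∈ P
  pos : ∀ p ∈ P, ∀ a : A, 0 ≤ a → 0 ≤ J p a
  map_unit : ∀ p ∈ P, J p u = p
  fix : ∀ p ∈ P, ∀ e : A, 0 ≤ e → e ≤ u → e ≤ p → J p e = e
  ker_le : ∀ p ∈ P, ∀ e : A, 0 ≤ e → e ≤ u → J p e = 0 → e ≤ u - p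
  comp : ∀ p ∈ P, ∀ q ∈ P, ∀ r ∈ P, p + q + r ≤ u →
    (J (p + r)).comp (J (q + r)) = J r

variable {A : Type*} [AddCommGroup A] [PartialOrder A] [IsOrderedAddMonoid A] [Module ℝ A] {u : A}

/-- `x` commutes with the projection `p`: `x = J_p x + J_{1−p} x`. -/
def CompressionBase.Commutes (cb : CompressionBase A u) (x p : A) : Prop :=
  x = cb.J p x + cb.J (u - p) x

/-- The set `PC(a)` of projections commuting with `a`. -/
def CompressionBase.PC (cb : CompressionBase A u) (a : A) : Set A :=
  {p ∈ cb.P | cb.Commutes a p}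

/-- The P-bicommutant `P(a) = PC(PC(a) ∪ {a})`. -/
def CompressionBase.Pbi (cb : CompressionBase A u) (a : A) : Set A :=
  {q ∈ cb.P | cb.Commutes a q ∧ ∀ p ∈ cb.PC a, cb.Commutes p q}

/-- `P^±(a)`: the projections in `P(a)` with `J_{1−p} a ≤ 0 ≤ J_p a`. -/
def CompressionBase.Ppm (cb : CompressionBase A u) (a : A) : Set A :=
  {p ∈ cb.Pbi a | cb.J (u - p) a ≤ 0 ∧ 0 ≤ cb.J p a}

/-- If `q` commutes with `p` (both in `P`), then `J p` and `J q` commute as maps. -/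
lemma CompressionBase.comm_of_commutes (cb : CompressionBase A u) {p q : A}
    (hpP : p ∈ cb.P) (hqP : q ∈ cb.P)
    (h : q = cb.J p q + cb.J (u - p) q) :
    (cb.J p).comp (cb.J q) = (cb.J q).comp (cb.J p) := by
  set d := cb.J p q with hd
  have hupP : u - p ∈ cb.P := cb.compl_mem p hpP
  have hd0 : 0 ≤ d := cb.pos p hpP q (cb.mem_nonneg q hqP)
  have hdp : d ≤ p := by
    have h1 := cb.pos p hpP (u - q) (sub_nonneg.2 (cb.mem_le q hqP))
    rw [map_sub, cb.map_unit p hpP] at h1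
    exact sub_nonneg.1 h1
  have hqd : q - d = cb.J (u - p) q := by
    conv_lhs => rw [h]
    abel
  have hf0 : 0 ≤ q - d := by rw [hqd]; exact cb.pos _ hupP q (cb.mem_nonneg q hqP)
  have hdq : d ≤ q := sub_nonneg.1 hf0
  have hfu : q - d ≤ u - p := by
    have h1 := cb.pos _ hupP (u - q) (sub_nonneg.2 (cb.mem_le q hqP))
    rw [map_sub, cb.map_unit _ hupP, ← hqd] at h1
    exact sub_nonneg.1 h1
  have hsum : p + q - d ≤ u := by
    have := add_le_add_right hfu p
    calc p + q - d = p + (q - d) := by abel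
    _ ≤ p + (u - p) := this
    _ = u := by abel
  have hdP : d ∈ cb.P := by
    refine cb.normal d (p - d) (q - d) hd0 (sub_nonneg.2 hdp) hf0 ?_ ?_ ?_
    · calc d + (p - d) + (q - d) = p + q - d := by abel
      _ ≤ u := hsum
    · have : d + (p - d) = p := by abel
      rw [this]; exact hpP
    · have : d + (q - d) = q := by abel
      rw [this]; exact hqP
  have hqdP : q - d ∈ cb.P := by
    refine cb.normal (q - d) (u - p - (q - d)) d hf0 (sub_nonneg.2 hfu) hd0 ?_ ?_ ?_
    · have h1 : q - d + (u - p - (q - d)) + d = u - p + d := by abel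
      rw [h1]
      calc u - p + d ≤ u - p + p := add_le_add_right hdp _
      _ = u := by abel
    · have : q - d + (u - p - (q - d)) = u - p := by abel
      rw [this]; exact hupP
    · have : q - d + d = q := by abel
      rw [this]; exact hqP
  have hpdP : p - d ∈ cb.P := by
    refine cb.normal (p - d) d (u - q - (p - d)) (sub_nonneg.2 hdp) hd0 ?_ ?_ ?_ ?_
    · rw [sub_nonneg, sub_le_sub_iff]
      rw [sub_le_sub_iff] at hfu
      rwa [add_comm q p] at hfu
    · have h1 : p - d + d + (u - q - (p - d)) = u - q + d := by abel
      rw [h1]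
      calc u - q + d ≤ u - q + q := add_le_add_right hdq _
      _ = u := by abel
    · have : p - d + d = p := by abel
      rw [this]; exact hpP
    · have : p - d + (u - q - (p - d)) = u - q := by abel
      rw [this]; exact cb.compl_mem q hqP
  have hle : p - d + (q - d) + d ≤ u := by
    have h1 : p - d + (q - d) + d = p + q - d := by abel
    rw [h1]; exact hsum
  have hle' : q - d + (p - d) + d ≤ u := by
    have h1 : q - d + (p - d) + d = p + q - d := by abel
    rw [h1]; exact hsum
  have h1 := cb.comp (p - d) hpdP (q - d) hqdP d hdP hle
  have h2 := cb.comp (q - d) hqdP (p - d) hpdP d hdP hle'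
  rw [sub_add_cancel, sub_add_cancel] at h1 h2
  exact h1.trans h2.symm

/-- If a compression base has the comparability property, then the
orthogonal decomposition is unique: for any `p, q ∈ P^±(a)` one has
`J_p a = J_q a` and `−J_{1−p} a = −J_{1−q} a`. -/
theorem orth_decomposition_unique (cb : CompressionBase A u)
    (hcomp : ∀ a : A, ∃ p, p ∈ cb.Ppm a)
    (a p q : A) (hp : p ∈ cb.Ppm a) (hq : q ∈ cb.Ppm a) :
    cb.J p a = cb.J q a ∧ -cb.J (u - p) a = -cb.J (u - q) a := by
  obtain ⟨⟨hpP, hpa, hpcom⟩, hpneg, hppos⟩ := hp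
  obtain ⟨⟨hqP, hqa, hqcom⟩, hqneg, hqpos⟩ := hq
  have hupP : u - p ∈ cb.P := cb.compl_mem p hpP
  have huqP : u - q ∈ cb.P := cb.compl_mem q hqP
  have hqp : q = cb.J p q + cb.J (u - p) q := hpcom q ⟨hqP, hqa⟩
  have hpq : p = cb.J q p + cb.J (u - q) p := hqcom p ⟨hpP, hpa⟩
  have hc1 := cb.comm_of_commutes hpP hqP hqp
  have hc2 : (cb.J p).comp (cb.J (u - q)) = (cb.J (u - q)).comp (cb.J p) := by
    refine cb.comm_of_commutes hpP huqP ?_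
    rw [map_sub, map_sub, cb.map_unit p hpP, cb.map_unit _ hupP]
    conv_lhs => rw [hqp]
    abel
  have hc3 : (cb.J q).comp (cb.J (u - p)) = (cb.J (u - p)).comp (cb.J q) := by
    refine cb.comm_of_commutes hqP hupP ?_
    rw [map_sub, map_sub, cb.map_unit q hqP, cb.map_unit _ huqP]
    conv_lhs => rw [hpq]
    abel
  have haP : a = cb.J p a + cb.J (u - p) a := hpa
  have haQ : a = cb.J q a + cb.J (u - q) a := hqa
  have z1 : cb.J p (cb.J (u - q) a) = 0 := by
    refine le_antisymm ?_ ?_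
    · have h1 := cb.pos p hpP (-(cb.J (u - q) a)) (neg_nonneg.2 hqneg)
      rw [map_neg] at h1
      exact neg_nonneg.1 h1
    · have h1 : cb.J p (cb.J (u - q) a) = cb.J (u - q) (cb.J p a) :=
        LinearMap.congr_fun hc2 a
      rw [h1]
      exact cb.pos _ huqP _ hppos
  have z2 : cb.J q (cb.J (u - p) a) = 0 := by
    refine le_antisymm ?_ ?_
    · have h1 := cb.pos q hqP (-(cb.J (u - p) a)) (neg_nonneg.2 hpneg)
      rw [map_neg] at h1
      exact neg_nonneg.1 h1
    · have h1 : cb.J q (cb.J (u - p) a) = cb.J (u - p) (cb.J q a) :=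
        LinearMap.congr_fun hc3 a
      rw [h1]
      exact cb.pos _ hupP _ hqpos
  have eq1 : cb.J p a = cb.J p (cb.J q a) := by
    conv_lhs => rw [haQ]
    rw [map_add, z1, add_zero]
  have eq2 : cb.J q a = cb.J q (cb.J p a) := by
    conv_lhs => rw [haP]
    rw [map_add, z2, add_zero]
  have eqc : cb.J p (cb.J q a) = cb.J q (cb.J p a) := LinearMap.congr_fun hc1 a
  have main : cb.J p a = cb.J q a := eq1.trans (eqc.trans eq2.symm)
  refine ⟨main, ?_⟩
  have hY1 : a - cb.J p a = cb.J (u - p) a := sub_eq_of_eq_add' haP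
  have hY2 : a - cb.J q a = cb.J (u - q) a := sub_eq_of_eq_add' haQ
  rw [← hY1, ← hY2, main]
end
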